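/- arXiv:2303.06921 — 7 statements merged into one kernel-verified Lean document; each statement's English description precedes it below -/
import Mathlib

section
/- Let n ≥ 2 and S a semiring. Then M_n(S) has a unity if and only if S has both a zero and a unity. Moreover, in that case, the unity of M_n(S) is the matrix with 1_S on the diagonal and 0_S elsewhere. -/
/-- A semiring in the sense of the paper: associative `+` and `*`, `+` commutative,
`*` distributing over `+` from both sides; no zero or unity assumed. -/
class PSemiring (S : Type) extends AddCommSemigroup S, Semigroup S where
  left_distrib : ∀ a b c : S, a * (b + c) = a * b + a * c
  right_distrib : ∀ a b c : S, (a + b) * c = a * c + b * c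

section Defs
variable {T : Type} [Add T] [Mul T]

def MulAbsorbing (w : T) : Prop := ∀ a : T, a * w = w ∧ w * a = w
def AddAbsorbing (w : T) : Prop := ∀ a : T, a + w = w
def AddNeutral (w : T) : Prop := ∀ a : T, a + w = a
def BiAbsorbing (w : T) : Prop := MulAbsorbing w ∧ AddAbsorbing w
def IsZero (w : T) : Prop := MulAbsorbing w ∧ AddNeutral w
def IsUnity (w : T) : Prop := ∀ a : T, w * a = a ∧ a * w = a

def IsBiIdeal (I : Set T) : Prop :=
  I.Nonempty ∧ ∀ a ∈ I, ∀ s : T, a + s ∈ I ∧ a * s ∈ I ∧ s * a ∈ I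

def IsCongruence (r : T → T → Prop) : Prop :=
  Equivalence r ∧ (∀ a b c d : T, r a b → r c d → r (a + c) (b + d)) ∧
    (∀ a b c d : T, r a b → r c d → r (a * c) (b * d))

/-- The standard quasiordering on a semiring. -/
def leS (a b : T) : Prop := a = b ∨ ∃ c : T, a + c = b

/-- `addPow m b` is the `(m+1)`-fold sum `b + ⋯ + b`. -/
def addPow : ℕ → T → T
  | 0, b => b
  | m + 1, b => addPow m b + b

end Defs

def CongSimple (T : Type) [Add T] [Mul T] : Prop :=
  (∃ a b : T, a ≠ b) ∧
    ∀ r : T → T → Prop, IsCongruence r →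
      (∀ a b : T, r a b ↔ a = b) ∨ (∀ a b : T, r a b)

def BiIdealSimple (T : Type) [Add T] [Mul T] : Prop :=
  (∃ a b : T, a ≠ b) ∧
    ∀ I : Set T, IsBiIdeal I → (∃ w : T, I = {w}) ∨ I = Set.univ

def BiIdealFree (T : Type) [Add T] [Mul T] : Prop :=
  (∃ a b : T, a ≠ b) ∧ ∀ I : Set T, IsBiIdeal I → I = Set.univ

/-- Sum of a nonempty family indexed by `Fin (n+1)`. -/
def finSum {S : Type} [Add S] : ∀ {n : ℕ}, (Fin (n + 1) → S) → S
  | 0, f => f 0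
  | n + 1, f => finSum (fun i : Fin (n + 1) => f i.castSucc) + f (Fin.last (n + 1))

/-- `Mat n S` is the semiring of `(n+1) × (n+1)` matrices over `S`. -/
structure Mat (n : ℕ) (S : Type) where
  entry : Fin (n + 1) → Fin (n + 1) → S

instance {n : ℕ} {S : Type} [Add S] : Add (Mat n S) :=
  ⟨fun A B => ⟨fun i j => A.entry i j + B.entry i j⟩⟩

instance {n : ℕ} {S : Type} [Add S] [Mul S] : Mul (Mat n S) :=
  ⟨fun A B => ⟨fun i j => finSum (fun k => A.entry i k * B.entry k j)⟩⟩

/-- The constant matrix `ā`. -/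
def Mat.const (n : ℕ) {S : Type} (a : S) : Mat n S := ⟨fun _ _ => a⟩


section AuxLemmas

variable {S : Type} [PSemiring S]

lemma pSemiring_mul_add (a b c : S) : a * (b + c) = a * b + a * c :=
  PSemiring.left_distrib a b c

lemma pSemiring_add_mul (a b c : S) : (a + b) * c = a * c + b * c :=
  PSemiring.right_distrib a b c

lemma finSum_succ {T : Type} [Add T] {n : ℕ} (f : Fin (n + 2) → T) :
    finSum f = finSum (fun i : Fin (n + 1) => f i.castSucc) + f (Fin.last (n + 1)) := rfl

lemma finSum_mul_right : ∀ {n : ℕ} (f : Fin (n + 1) → S) (a : S),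
    finSum (fun k => f k * a) = finSum f * a := by
  intro n
  induction n with
  | zero => intro f a; rfl
  | succ n ih =>
    intro f a
    rw [finSum_succ, finSum_succ f, pSemiring_add_mul, ih]

lemma finSum_mul_left : ∀ {n : ℕ} (f : Fin (n + 1) → S) (a : S),
    finSum (fun k => a * f k) = a * finSum f := by
  intro n
  induction n with
  | zero => intro f a; rfl
  | succ n ih =>
    intro f a
    rw [finSum_succ, finSum_succ f, pSemiring_mul_add, ih]

lemma finSum_update : ∀ {n : ℕ} (f : Fin (n + 1) → S) (i : Fin (n + 1)) (x : S),
    finSum (fun k => if k = i then f i + x else f k) = finSum f + x := by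
  intro n
  induction n with
  | zero =>
    intro f i x
    have hi : i = 0 := Fin.fin_one_eq_zero i
    subst hi
    show (if (0 : Fin 1) = 0 then f 0 + x else f 0) = f 0 + x
    simp
  | succ n ih =>
    intro f i x
    by_cases h : i = Fin.last (n + 1)
    · subst h
      rw [finSum_succ, finSum_succ f]
      have h1 : (fun k : Fin (n + 1) =>
          if k.castSucc = Fin.last (n + 1) then f (Fin.last (n + 1)) + x else f k.castSucc)
          = fun k : Fin (n + 1) => f k.castSucc := by
        funext k
        exact if_neg (Fin.castSucc_lt_last k).ne
      rw [h1, if_pos rfl, add_assoc]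
    · obtain ⟨j, rfl⟩ := Fin.exists_castSucc_eq.mpr h
      rw [finSum_succ, finSum_succ f]
      have h1 : (fun k : Fin (n + 1) =>
          if k.castSucc = j.castSucc then f j.castSucc + x else f k.castSucc)
          = fun k : Fin (n + 1) =>
            if k = j then f j.castSucc + x else f k.castSucc := by
        funext k
        simp [Fin.castSucc_inj]
      have h2 := ih (fun m : Fin (n + 1) => f m.castSucc) j x
      rw [h1, h2, if_neg (fun hc => (Fin.castSucc_lt_last j).ne hc.symm), add_right_comm]

lemma finSum_const_neutral {z : S} (hz : ∀ a : S, a + z = a) :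
    ∀ {n : ℕ}, finSum (fun _ : Fin (n + 1) => z) = z := by
  intro n
  induction n with
  | zero => rfl
  | succ n ih => rw [finSum_succ, ih, hz]

lemma finSum_single {z : S} (hz : ∀ a : S, a + z = a) :
    ∀ {n : ℕ} (i : Fin (n + 1)) (a : S),
      finSum (fun k => if k = i then a else z) = a := by
  intro n
  induction n with
  | zero =>
    intro i a
    have hi : i = 0 := Fin.fin_one_eq_zero i
    subst hi
    show (if (0 : Fin 1) = 0 then a else z) = a
    simp
  | succ n ih =>
    intro i a
    by_cases h : i = Fin.last (n + 1)
    · subst h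
      rw [finSum_succ]
      have h1 : (fun k : Fin (n + 1) =>
          if k.castSucc = Fin.last (n + 1) then a else z) = fun _ : Fin (n + 1) => z := by
        funext k
        exact if_neg (Fin.castSucc_lt_last k).ne
      rw [h1, finSum_const_neutral hz, if_pos rfl, add_comm, hz]
    · obtain ⟨j, rfl⟩ := Fin.exists_castSucc_eq.mpr h
      rw [finSum_succ]
      have h1 : (fun k : Fin (n + 1) => if k.castSucc = j.castSucc then a else z)
          = fun k : Fin (n + 1) => if k = j then a else z := by
        funext k
        simp [Fin.castSucc_inj]
      rw [h1, ih, if_neg (fun hc => (Fin.castSucc_lt_last j).ne hc.symm), hz]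

lemma neutral_unique {u w : S} (hu : ∀ a : S, a + u = a) (hw : ∀ a : S, a + w = a) :
    u = w := by
  have h1 : u + w = u := hw u
  have h2 : w + u = w := hu w
  rw [← h1, add_comm, h2]

lemma Mat.ext' {n : ℕ} {A B : Mat n S} (h : ∀ i j, A.entry i j = B.entry i j) : A = B := by
  cases A; cases B
  congr 1
  funext i j
  exact h i j

lemma mul_entry {n : ℕ} (A B : Mat n S) (i j : Fin (n + 1)) :
    (A * B).entry i j = finSum (fun k => A.entry i k * B.entry k j) := rfl

lemma diag_unity {n : ℕ} {z e : S} (hz : IsZero z) (he : IsUnity e) :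
    IsUnity (⟨fun i j => if i = j then e else z⟩ : Mat n S) := by
  intro A
  constructor
  · apply Mat.ext'
    intro i j
    rw [mul_entry]
    have h1 : (fun k => (if i = k then e else z) * A.entry k j)
        = fun k => if k = i then A.entry i j else z := by
      funext k
      by_cases hk : k = i
      · subst hk
        rw [if_pos rfl, if_pos rfl, (he (A.entry k j)).1]
      · rw [if_neg (fun hc => hk hc.symm), if_neg hk]
        exact (hz.1 (A.entry k j)).2
    rw [h1, finSum_single hz.2]
  · apply Mat.ext'
    intro i j
    rw [mul_entry]
    have h1 : (fun k => A.entry i k * (if k = j then e else z))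
        = fun k => if k = j then A.entry i j else z := by
      funext k
      by_cases hk : k = j
      · subst hk
        rw [if_pos rfl, if_pos rfl, (he (A.entry i k)).2]
      · rw [if_neg hk, if_neg hk]
        exact (hz.1 (A.entry i k)).1
    rw [h1, finSum_single hz.2]

end AuxLemmas


/-- for `n ≥ 2` (`Mat (n+1)` has size `n+2`), `M_n(S)` has a unity iff
`S` has a zero and a unity; the unity is then diagonal. -/
theorem stmt4 {S : Type} [PSemiring S] (n : ℕ) :
    ((∃ E : Mat (n + 1) S, IsUnity E) ↔ ((∃ z : S, IsZero z) ∧ ∃ e : S, IsUnity e)) ∧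
    (∀ z e : S, IsZero z → IsUnity e →
      IsUnity (⟨fun i j => if i = j then e else z⟩ : Mat (n + 1) S)) := by

  classical
  have hzero_one : (0 : Fin (n + 2)) ≠ 1 := Fin.zero_ne_one'
  constructor
  · constructor
    · rintro ⟨E, hE⟩
      -- unity of S
      have hrow : ∀ a : S, finSum (fun k => E.entry 0 k) * a = a := by
        intro a
        have h := congrArg (fun M : Mat (n + 1) S => M.entry 0 0) (hE (Mat.const _ a)).1
        simpa [mul_entry, Mat.const, finSum_mul_right] using h
      have hcol : ∀ a : S, a * finSum (fun k => E.entry k 0) = a := by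
        intro a
        have h := congrArg (fun M : Mat (n + 1) S => M.entry 0 0) (hE (Mat.const _ a)).2
        simpa [mul_entry, Mat.const, finSum_mul_left] using h
      set e := finSum (fun k => E.entry 0 k) with he_def
      have hec : e = finSum (fun k => E.entry k 0) := by
        have h1 := hrow (finSum (fun k => E.entry k 0))
        have h2 := hcol e
        rw [← h2, h1]
      have hunity : IsUnity e := by
        intro a
        refine ⟨hrow a, ?_⟩
        rw [hec]; exact hcol a
      -- column-1 sums
      have hcol1 : ∀ a : S, finSum (fun k => a * E.entry k 1) = a := by
        intro a
        have h := congrArg (fun M : Mat (n + 1) S => M.entry 0 1) (hE (Mat.const _ a)).2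
        simpa [mul_entry, Mat.const] using h
      set z := E.entry 0 1 with hz_def
      -- a + z * c = a
      have hnr : ∀ c a : S, a + z * c = a := by
        intro c a
        set v : Fin (n + 2) → S := fun k => if k = 1 then a + c else a with hv
        set A : Mat (n + 1) S := ⟨fun k _ => v k⟩ with hA
        have h := congrArg (fun M : Mat (n + 1) S => M.entry 0 0) (hE A).1
        have h2 : finSum (fun k => E.entry 0 k * v k) = v 0 := h
        have h3 : (fun k => E.entry 0 k * v k)
            = fun k => if k = 1 then E.entry 0 1 * a + E.entry 0 1 * c
              else E.entry 0 k * a := by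
          funext k
          by_cases hk : k = (1 : Fin (n + 2))
          · subst hk
            simp [hv, pSemiring_mul_add]
          · simp [hv, hk]
        have h3' := finSum_update (fun m => E.entry 0 m * a) 1 (E.entry 0 1 * c)
        rw [h3, h3'] at h2
        have h4 : finSum (fun m => E.entry 0 m * a) = a := by
          rw [finSum_mul_right]; exact hrow a
        rw [h4] at h2
        have h5 : v 0 = a := if_neg hzero_one
        rw [h5] at h2
        exact h2
      -- a + c * z = a
      have hnl : ∀ c a : S, a + c * z = a := by
        intro c a
        set v : Fin (n + 2) → S := fun k => if k = 0 then a + c else a with hv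
        set A : Mat (n + 1) S := ⟨fun _ k => v k⟩ with hA
        have h := congrArg (fun M : Mat (n + 1) S => M.entry 0 1) (hE A).2
        have h2 : finSum (fun k => v k * E.entry k 1) = v 1 := h
        have h3 : (fun k => v k * E.entry k 1)
            = fun k => if k = 0 then a * E.entry 0 1 + c * E.entry 0 1
              else a * E.entry k 1 := by
          funext k
          by_cases hk : k = (0 : Fin (n + 2))
          · subst hk
            simp [hv, pSemiring_add_mul]
          · simp [hv, hk]
        have h3' := finSum_update (fun m => a * E.entry m 1) 0 (c * E.entry 0 1)
        rw [h3, h3', hcol1] at h2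
        have h5 : v 1 = a := if_neg (fun hc => hzero_one hc.symm)
        rw [h5] at h2
        exact h2
      -- z is additively neutral
      have hzn : ∀ a : S, a + z = a := by
        intro a
        have h1 := hnr e a
        rwa [(hunity z).2] at h1
      have hzabs : MulAbsorbing z := by
        intro a
        constructor
        · exact neutral_unique (hnl a) hzn
        · exact neutral_unique (hnr a) hzn
      exact ⟨⟨z, hzabs, hzn⟩, ⟨e, hunity⟩⟩
    · rintro ⟨⟨z, hz⟩, ⟨e, he⟩⟩
      exact ⟨_, diag_unity hz he⟩
  · intro z e hz he
    exact diag_unity hz he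
end

section
/- Let S be a congruence-simple semiring with |S·S| ≥ 2. Then either |S| = 2 with S both multiplicatively and additively idempotent and without a multiplicatively absorbing element, or for all a ≠ b in S there exist c, d ∈ S with ca ≠ cb and ad ≠ bd. -/
lemma twoCase {S : Type} [PSemiring S] (h : CongSimple S)
    (hproj : (∀ a b : S, a * b = a) ∨ (∀ a b : S, a * b = b)) :
    (∃ x y : S, x ≠ y ∧ ∀ z : S, z = x ∨ z = y) ∧
      (∀ a : S, a + a = a ∧ a * a = a) ∧ ¬∃ w : S, MulAbsorbing w := by
  obtain ⟨⟨a0, b0, hab0⟩, hcong⟩ := h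
  have hadd : ∀ a : S, a + a = a := by
    rcases hproj with hp | hp
    · intro a
      have h1 := PSemiring.left_distrib a a a
      simp only [hp] at h1
      exact h1.symm
    · intro a
      have h1 := PSemiring.right_distrib a a a
      simp only [hp] at h1
      exact h1.symm
  have hmul : ∀ a : S, a * a = a := by
    rcases hproj with hp | hp <;> exact fun a => hp a a
  -- key: for each t, either cancellation at t or t is additively absorbing
  have key : ∀ t : S, (∀ x y : S, x + t = y + t → x = y) ∨ AddAbsorbing t := by
    intro t
    have hc : IsCongruence (fun a b : S => a + t = b + t) := by
      refine ⟨⟨fun a => rfl, fun h => h.symm, fun h1 h2 => h1.trans h2⟩, ?_, ?_⟩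
      · intro a b c d h1 h2
        have e : ∀ x y : S, (x + y) + t = (x + t) + (y + t) := by
          intro x y
          calc (x + y) + t = (x + y) + (t + t) := by rw [hadd]
            _ = (x + t) + (y + t) := by
                rw [add_assoc, add_assoc, add_comm y (t + t), add_assoc, add_comm t y]
        rw [e a c, e b d, h1, h2]
      · intro a b c d h1 h2
        rcases hproj with hp | hp
        · simpa only [hp] using h1
        · simpa only [hp] using h2
    rcases hcong _ hc with hid | hfull
    · exact Or.inl fun x y hxy => (hid x y).mp hxy
    · refine Or.inr fun a => ?_
      have := hfull a t
      rwa [hadd] at this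
  -- a0 + b0 is additively absorbing
  have habs : AddAbsorbing (a0 + b0) := by
    rcases key (a0 + b0) with hinj | habs
    · exfalso
      apply hab0
      apply hinj
      calc a0 + (a0 + b0) = (a0 + a0) + b0 := (add_assoc _ _ _).symm
        _ = a0 + b0 := by rw [hadd]
        _ = a0 + (b0 + b0) := by rw [hadd]
        _ = (a0 + b0) + b0 := (add_assoc _ _ _).symm
        _ = (b0 + a0) + b0 := by rw [add_comm a0 b0]
        _ = b0 + (a0 + b0) := add_assoc _ _ _
    · exact habs
  set T := a0 + b0 with hTdef
  -- any two non-T elements are equal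
  have uniq : ∀ x y : S, x ≠ T → y ≠ T → x = y := by
    intro x y hx hy
    rcases key x with hix | hax
    · rcases key y with hiy | hay
      · have e1 : x + y = y := by
          apply hix
          calc (x + y) + x = x + (y + x) := add_assoc _ _ _
            _ = x + (x + y) := by rw [add_comm y x]
            _ = (x + x) + y := (add_assoc _ _ _).symm
            _ = x + y := by rw [hadd]
            _ = y + x := add_comm x y
        have e2 : x + y = x := by
          apply hiy
          calc (x + y) + y = x + (y + y) := add_assoc _ _ _
            _ = x + y := by rw [hadd]
        rw [← e2, e1]
      · exact absurd ((hay T).symm.trans ((add_comm T y).trans (habs y))) hy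
    · exact absurd ((hax T).symm.trans ((add_comm T x).trans (habs x))) hx
  have hs : ∃ s : S, s ≠ T := by
    by_cases h0 : a0 = T
    · exact ⟨b0, fun hb => hab0 (h0.trans hb.symm)⟩
    · exact ⟨a0, h0⟩
  obtain ⟨s, hsne⟩ := hs
  refine ⟨⟨T, s, Ne.symm hsne, fun z => ?_⟩, fun a => ⟨hadd a, hmul a⟩, ?_⟩
  · by_cases hz : z = T
    · exact Or.inl hz
    · exact Or.inr (uniq z s hz hsne)
  · rintro ⟨w, hw⟩
    rcases hproj with hp | hp
    · exact hab0 (((hp a0 w).symm.trans (hw a0).1).trans (((hp b0 w).symm.trans (hw b0).1)).symm)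
    · exact hab0 (((hp w a0).symm.trans (hw a0).2).trans (((hp w b0).symm.trans (hw b0).2)).symm)

/-- a congruence-simple semiring with `|S·S| ≥ 2` is either the
two-element additively and multiplicatively idempotent semiring without a
multiplicatively absorbing element, or multiplication separates points from both sides. -/
theorem stmt7 {S : Type} [PSemiring S] (h : CongSimple S)
    (hSS : ∃ a b c d : S, a * b ≠ c * d) :
    ((∃ x y : S, x ≠ y ∧ ∀ z : S, z = x ∨ z = y) ∧
      (∀ a : S, a + a = a ∧ a * a = a) ∧ ¬∃ w : S, MulAbsorbing w) ∨
    (∀ a b : S, a ≠ b → ∃ c d : S, c * a ≠ c * b ∧ a * d ≠ b * d) := by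
  have hcong := h.2
  have hrL : IsCongruence (fun a b : S => ∀ c, c * a = c * b) := by
    refine ⟨⟨fun a c => rfl, fun h c => (h c).symm, fun h1 h2 c => (h1 c).trans (h2 c)⟩, ?_, ?_⟩
    · intro a b c d h1 h2 e
      rw [PSemiring.left_distrib, PSemiring.left_distrib, h1 e, h2 e]
    · intro a b c d h1 h2 e
      rw [← mul_assoc, ← mul_assoc, h1 e]
      exact h2 (e * b)
  have hrR : IsCongruence (fun a b : S => ∀ c, a * c = b * c) := by
    refine ⟨⟨fun a c => rfl, fun h c => (h c).symm, fun h1 h2 c => (h1 c).trans (h2 c)⟩, ?_, ?_⟩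
    · intro a b c d h1 h2 e
      rw [PSemiring.right_distrib, PSemiring.right_distrib, h1 e, h2 e]
    · intro a b c d h1 h2 e
      rw [mul_assoc, mul_assoc, h2 e]
      exact h1 (d * e)
  rcases hcong _ hrL with hLid | hLfull
  · rcases hcong _ hrR with hRid | hRfull
    · right
      intro a b hab
      have h1 : ¬ ∀ c : S, c * a = c * b := fun hh => hab ((hLid a b).mp hh)
      have h2 : ¬ ∀ d : S, a * d = b * d := fun hh => hab ((hRid a b).mp hh)
      push_neg at h1 h2
      obtain ⟨c, hc⟩ := h1
      obtain ⟨d, hd⟩ := h2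
      exact ⟨c, d, hc, hd⟩
    · -- products depend only on the right factor
      left
      have hg : ∀ a b : S, a * b = b * b := fun a b => hRfull a b b
      have hk : IsCongruence (fun a b : S => a * a = b * b) := by
        refine ⟨⟨fun a => rfl, fun h => h.symm, fun h1 h2 => h1.trans h2⟩, ?_, ?_⟩
        · intro a b c d h1 h2
          have e : ∀ x y : S, (x + y) * (x + y) = x * x + y * y := by
            intro x y
            rw [PSemiring.left_distrib, hg (x + y) x, hg (x + y) y]
          rw [e a c, e b d, h1, h2]
        · intro a b c d h1 h2
          rw [hg a c, hg b d, h2]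
      rcases hcong _ hk with hkid | hkfull
      · have hsq : ∀ b : S, b * b = b := by
          intro b
          apply (hkid (b * b) b).mp
          calc (b * b) * (b * b) = b * (b * b) := hRfull (b * b) b (b * b)
            _ = (b * b) * b := (mul_assoc _ _ _).symm
            _ = b * b := hg (b * b) b
        have hp : ∀ a b : S, a * b = b := fun a b => (hg a b).trans (hsq b)
        exact twoCase h (Or.inr hp)
      · exfalso
        obtain ⟨a, b, c, d, hne'⟩ := hSS
        exact hne' ((hg a b).trans ((hkfull b d).trans (hg c d).symm))
  · -- products depend only on the left factor
    left
    have hf : ∀ a b : S, a * b = a * a := fun a b => hLfull b a a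
    have hk : IsCongruence (fun a b : S => a * a = b * b) := by
      refine ⟨⟨fun a => rfl, fun h => h.symm, fun h1 h2 => h1.trans h2⟩, ?_, ?_⟩
      · intro a b c d h1 h2
        have e : ∀ x y : S, (x + y) * (x + y) = x * x + y * y := by
          intro x y
          rw [PSemiring.right_distrib, hf x (x + y), hf y (x + y)]
        rw [e a c, e b d, h1, h2]
      · intro a b c d h1 h2
        rw [hf a c, hf b d, h1]
    rcases hcong _ hk with hkid | hkfull
    · have hsq : ∀ a : S, a * a = a := by
        intro a
        apply (hkid (a * a) a).mp
        calc (a * a) * (a * a) = (a * a) * a := hLfull (a * a) a (a * a)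
          _ = a * (a * a) := mul_assoc _ _ _
          _ = a * a := hLfull (a * a) a a
      have hp : ∀ a b : S, a * b = a := fun a b => (hf a b).trans (hsq a)
      exact twoCase h (Or.inl hp)
    · exfalso
      obtain ⟨a, b, c, d, hne'⟩ := hSS
      exact hne' ((hf a b).trans ((hkfull a c).trans (hf c d).symm))
end

section
/- Let S be a semiring such that M_n(S) is congruence-simple for some n ≥ 2. Then S is congruence-simple, S contains no bi-absorbing element, |S·S| ≥ 2, and S is either additively idempotent or additively cancellative. -/
namespace Stmt8Aux

section PS
variable {S : Type} [PSemiring S]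

private lemma ld (a b c : S) : a * (b + c) = a * b + a * c := PSemiring.left_distrib a b c
private lemma rd (a b c : S) : (a + b) * c = a * c + b * c := PSemiring.right_distrib a b c

lemma ap_zero (a : S) : addPow 0 a = a := rfl
lemma ap_succ (m : ℕ) (a : S) : addPow (m + 1) a = addPow m a + a := rfl
lemma ap_one (a : S) : addPow 1 a = a + a := rfl

lemma ap_add (m n : ℕ) (a : S) : addPow (m + n + 1) a = addPow m a + addPow n a := by
  induction n with
  | zero => rfl
  | succ n ih =>
    show addPow ((m + n + 1) + 1) a = _
    rw [ap_succ, ih, ap_succ, add_assoc]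

lemma ap_distrib (m : ℕ) (a b : S) : addPow m (a + b) = addPow m a + addPow m b := by
  induction m with
  | zero => rfl
  | succ m ih =>
    rw [ap_succ, ap_succ, ap_succ, ih]
    calc addPow m a + addPow m b + (a + b)
        = addPow m a + (addPow m b + (a + b)) := add_assoc _ _ _
      _ = addPow m a + ((addPow m b + a) + b) := by rw [add_assoc]
      _ = addPow m a + ((a + addPow m b) + b) := by rw [add_comm (addPow m b) a]
      _ = addPow m a + (a + (addPow m b + b)) := by rw [add_assoc]
      _ = addPow m a + a + (addPow m b + b) := (add_assoc _ _ _).symm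

lemma ap_mulR (m : ℕ) (a c : S) : addPow m a * c = addPow m (a * c) := by
  induction m with
  | zero => rfl
  | succ m ih => rw [ap_succ, rd, ih, ap_succ]

lemma ap_mulL (m : ℕ) (a c : S) : c * addPow m a = addPow m (c * a) := by
  induction m with
  | zero => rfl
  | succ m ih => rw [ap_succ, ld, ih, ap_succ]

lemma ap_comp (l k : ℕ) (a : S) : addPow l (addPow k a) = addPow ((l + 1) * (k + 1) - 1) a := by
  induction l with
  | zero =>
    show addPow k a = _
    congr 1
    omega
  | succ l ih =>
    rw [ap_succ, ih, ← ap_add]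
    congr 1
    have h1 : (l + 1 + 1) * (k + 1) = (l + 1) * (k + 1) + (k + 1) := by ring
    have h2 : 1 ≤ (l + 1) * (k + 1) := Nat.one_le_iff_ne_zero.mpr
      (Nat.mul_ne_zero (Nat.succ_ne_zero l) (Nat.succ_ne_zero k))
    omega

lemma leS_refl (a : S) : leS a a := Or.inl rfl

lemma leS_trans {a b c : S} (h1 : leS a b) (h2 : leS b c) : leS a c := by
  rcases h1 with rfl | ⟨x, hx⟩
  · exact h2
  rcases h2 with rfl | ⟨y, hy⟩
  · exact Or.inr ⟨x, hx⟩
  · exact Or.inr ⟨x + y, by rw [← add_assoc, hx, hy]⟩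

lemma leS_addR {a b : S} (h : leS a b) (c : S) : leS (a + c) (b + c) := by
  rcases h with rfl | ⟨x, hx⟩
  · exact leS_refl _
  · exact Or.inr ⟨x, by rw [add_assoc, add_comm c x, ← add_assoc, hx]⟩

lemma leS_addL {c d : S} (h : leS c d) (b : S) : leS (b + c) (b + d) := by
  rcases h with rfl | ⟨x, hx⟩
  · exact leS_refl _
  · exact Or.inr ⟨x, by rw [add_assoc, hx]⟩

lemma leS_add {a b c d : S} (h1 : leS a b) (h2 : leS c d) : leS (a + c) (b + d) :=
  leS_trans (leS_addR h1 c) (leS_addL h2 b)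

lemma leS_mulR {a b : S} (h : leS a b) (c : S) : leS (a * c) (b * c) := by
  rcases h with rfl | ⟨x, hx⟩
  · exact leS_refl _
  · exact Or.inr ⟨x * c, by rw [← rd, hx]⟩

lemma leS_mulL {a b : S} (h : leS a b) (c : S) : leS (c * a) (c * b) := by
  rcases h with rfl | ⟨x, hx⟩
  · exact leS_refl _
  · exact Or.inr ⟨c * x, by rw [← ld, hx]⟩

lemma leS_ap {a b : S} (h : leS a b) (m : ℕ) : leS (addPow m a) (addPow m b) := by
  induction m with
  | zero => exact h
  | succ m ih => exact leS_add ih h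

/-- the cancellation-kernel congruence -/
lemma cong_c : IsCongruence (fun a b : S => ∃ x, a + x = b + x) := by
  have htr : ∀ {a b c : S}, (∃ x, a + x = b + x) → (∃ x, b + x = c + x) → (∃ x, a + x = c + x) := by
    rintro a b c ⟨x, hx⟩ ⟨y, hy⟩
    refine ⟨x + y, ?_⟩
    calc a + (x + y) = (a + x) + y := (add_assoc _ _ _).symm
      _ = (b + x) + y := by rw [hx]
      _ = (b + y) + x := by rw [add_assoc, add_comm x y, ← add_assoc]
      _ = (c + y) + x := by rw [hy]
      _ = c + (x + y) := by rw [add_assoc, add_comm y x]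
  refine ⟨⟨fun a => ⟨a, rfl⟩, ?_, fun h1 h2 => htr h1 h2⟩, ?_, ?_⟩
  · rintro a b ⟨x, hx⟩; exact ⟨x, hx.symm⟩
  · rintro a b c d ⟨x, hx⟩ ⟨y, hy⟩
    refine ⟨x + y, ?_⟩
    calc (a + c) + (x + y) = (a + x) + (c + y) := by
          simp only [add_assoc, add_left_comm, add_comm]
      _ = (b + x) + (d + y) := by rw [hx, hy]
      _ = (b + d) + (x + y) := by
          simp only [add_assoc, add_left_comm, add_comm]
  · rintro a b c d ⟨x, hx⟩ ⟨y, hy⟩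
    have h1 : ∃ z, a * c + z = b * c + z := ⟨x * c, by rw [← rd, ← rd, hx]⟩
    have h2 : ∃ z, b * c + z = b * d + z := ⟨b * y, by rw [← ld, ← ld, hy]⟩
    exact htr h1 h2

/-- the mutual-leS congruence -/
lemma cong_q : IsCongruence (fun a b : S => leS a b ∧ leS b a) := by
  refine ⟨⟨fun a => ⟨leS_refl a, leS_refl a⟩, fun h => ⟨h.2, h.1⟩,
    fun h1 h2 => ⟨leS_trans h1.1 h2.1, leS_trans h2.2 h1.2⟩⟩, ?_, ?_⟩
  · intro a b c d h1 h2
    exact ⟨leS_add h1.1 h2.1, leS_add h1.2 h2.2⟩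
  · intro a b c d h1 h2
    exact ⟨leS_trans (leS_mulR h1.1 c) (leS_mulL h2.1 b),
      leS_trans (leS_mulR h1.2 d) (leS_mulL h2.2 a)⟩

/-- the "some multiple agrees" congruence -/
lemma cong_t : IsCongruence (fun a b : S => ∃ k, addPow k a = addPow k b) := by
  have key : ∀ (k l : ℕ) (x : S), addPow ((k + 1) * (l + 1) - 1) x = addPow k (addPow l x) := by
    intro k l x
    rw [ap_comp]
  have htr : ∀ {a b c : S}, (∃ k, addPow k a = addPow k b) → (∃ k, addPow k b = addPow k c) →
      (∃ k, addPow k a = addPow k c) := by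
    rintro a b c ⟨k, hk⟩ ⟨l, hl⟩
    refine ⟨(l + 1) * (k + 1) - 1, ?_⟩
    calc addPow ((l + 1) * (k + 1) - 1) a = addPow l (addPow k a) := key l k a
      _ = addPow l (addPow k b) := by rw [hk]
      _ = addPow ((l + 1) * (k + 1) - 1) b := (key l k b).symm
      _ = addPow ((k + 1) * (l + 1) - 1) b := by rw [mul_comm (l+1) (k+1)]
      _ = addPow k (addPow l b) := key k l b
      _ = addPow k (addPow l c) := by rw [hl]
      _ = addPow ((k + 1) * (l + 1) - 1) c := (key k l c).symm
      _ = addPow ((l + 1) * (k + 1) - 1) c := by rw [mul_comm (k+1) (l+1)]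
  refine ⟨⟨fun a => ⟨0, rfl⟩, ?_, fun h1 h2 => htr h1 h2⟩, ?_, ?_⟩
  · rintro a b ⟨k, hk⟩; exact ⟨k, hk.symm⟩
  · rintro a b c d ⟨k, hk⟩ ⟨l, hl⟩
    refine ⟨(l + 1) * (k + 1) - 1, ?_⟩
    rw [ap_distrib, ap_distrib]
    have e1 : addPow ((l + 1) * (k + 1) - 1) a = addPow ((l + 1) * (k + 1) - 1) b := by
      rw [key l k a, key l k b, hk]
    have e2 : addPow ((l + 1) * (k + 1) - 1) c = addPow ((l + 1) * (k + 1) - 1) d := by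
      rw [mul_comm (l+1) (k+1), key k l c, key k l d, hl]
    rw [e1, e2]
  · rintro a b c d ⟨k, hk⟩ ⟨l, hl⟩
    have h1 : ∃ m, addPow m (a * c) = addPow m (b * c) :=
      ⟨k, by rw [← ap_mulR, ← ap_mulR, hk]⟩
    have h2 : ∃ m, addPow m (b * c) = addPow m (b * d) :=
      ⟨l, by rw [← ap_mulL, ← ap_mulL, hl]⟩
    exact htr h1 h2

/-- the fixed-multiple congruence -/
lemma cong_pow (K : ℕ) : IsCongruence (fun a b : S => addPow K a = addPow K b) := by
  refine ⟨⟨fun a => rfl, fun h => h.symm, fun h1 h2 => h1.trans h2⟩, ?_, ?_⟩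
  · intro a b c d h1 h2
    rw [ap_distrib, ap_distrib, h1, h2]
  · intro a b c d h1 h2
    have e1 : addPow K (a * c) = addPow K (b * c) := by rw [← ap_mulR, ← ap_mulR, h1]
    have e2 : addPow K (b * c) = addPow K (b * d) := by rw [← ap_mulL, ← ap_mulL, h2]
    exact e1.trans e2

/-- the archimedean congruence -/
lemma cong_alpha :
    IsCongruence (fun a b : S => ∃ m n, leS a (addPow m b) ∧ leS b (addPow n a)) := by
  refine ⟨⟨fun a => ⟨0, 0, leS_refl a, leS_refl a⟩, ?_, ?_⟩, ?_, ?_⟩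
  · rintro a b ⟨m, n, h1, h2⟩; exact ⟨n, m, h2, h1⟩
  · rintro a b c ⟨m, n, h1, h2⟩ ⟨k, l, h3, h4⟩
    refine ⟨(m + 1) * (k + 1) - 1, (l + 1) * (n + 1) - 1, ?_, ?_⟩
    · exact leS_trans h1 (by rw [← ap_comp]; exact leS_ap h3 m)
    · exact leS_trans h4 (by rw [← ap_comp]; exact leS_ap h2 l)
  · rintro a b c d ⟨m, n, h1, h2⟩ ⟨k, l, h3, h4⟩
    have hsplit : ∀ (p q : ℕ) (x y : S),
        leS (addPow p x + addPow q y) (addPow (p + q + 1) (x + y)) := by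
      intro p q x y
      rw [ap_distrib, ap_add p q x, ap_add p q y]
      refine Or.inr ⟨addPow q x + addPow p y, ?_⟩
      simp only [add_assoc, add_left_comm, add_comm]
    refine ⟨m + k + 1, n + l + 1, ?_, ?_⟩
    · exact leS_trans (leS_add h1 h3) (hsplit m k b d)
    · exact leS_trans (leS_add h2 h4) (hsplit n l a c)
  · rintro a b c d ⟨m, n, h1, h2⟩ ⟨k, l, h3, h4⟩
    refine ⟨(m + 1) * (k + 1) - 1, (n + 1) * (l + 1) - 1, ?_, ?_⟩
    · -- a*c ≤ (ap m b)*c = ap m (b*c) ≤ ap m (ap k (b*d))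
      have s1 : leS (a * c) (addPow m (b * c)) := by
        rw [← ap_mulR]; exact leS_mulR h1 c
      have s2 : leS (b * c) (addPow k (b * d)) := by
        rw [← ap_mulL]; exact leS_mulL h3 b
      refine leS_trans s1 ?_
      rw [← ap_comp]
      exact leS_ap s2 m
    · have s1 : leS (b * d) (addPow n (a * d)) := by
        rw [← ap_mulR]; exact leS_mulR h2 d
      have s2 : leS (a * d) (addPow l (a * c)) := by
        rw [← ap_mulL]; exact leS_mulL h4 a
      refine leS_trans s1 ?_
      rw [← ap_comp]
      exact leS_ap s2 n

/-- congruence modulo a multiplicatively absorbing element -/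
lemma cong_modw {w : S} (hw : MulAbsorbing w) :
    IsCongruence (fun a b : S => a + w = b + w) := by
  refine ⟨⟨fun a => rfl, fun h => h.symm, fun h1 h2 => h1.trans h2⟩, ?_, ?_⟩
  · intro a b c d h1 h2
    calc (a + c) + w = a + (c + w) := add_assoc _ _ _
      _ = a + (d + w) := by rw [h2]
      _ = a + (w + d) := by rw [add_comm d w]
      _ = (a + w) + d := (add_assoc _ _ _).symm
      _ = (b + w) + d := by rw [h1]
      _ = b + (w + d) := add_assoc _ _ _
      _ = b + (d + w) := by rw [add_comm w d]
      _ = (b + d) + w := (add_assoc _ _ _).symm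
  · intro a b c d h1 h2
    have e1 : a * c + w = b * c + w := by
      have := congrArg (fun z => z * c) h1
      simpa only [rd, (hw c).2] using this
    have e2 : b * c + w = b * d + w := by
      have := congrArg (fun z => b * z) h2
      simpa only [ld, (hw b).1] using this
    exact e1.trans e2

lemma per_shift {a : S} {j δ : ℕ} (h : addPow j a = addPow (j + δ) a) (r : ℕ) :
    addPow (j + r) a = addPow (j + δ + r) a := by
  cases r with
  | zero => exact h
  | succ r =>
    have h1 : addPow (j + (r + 1)) a = addPow j a + addPow r a := ap_add j r a
    have h2 : addPow (j + δ + (r + 1)) a = addPow (j + δ) a + addPow r a := ap_add (j + δ) r a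
    rw [h1, h2, h]

lemma per_all {a : S} {j δ : ℕ} (h : addPow j a = addPow (j + δ) a) :
    ∀ i, j ≤ i → addPow i a = addPow (i + δ) a := by
  intro i hi
  obtain ⟨r, rfl⟩ := Nat.exists_eq_add_of_le hi
  have := per_shift h r
  rw [this]
  congr 1
  omega

lemma per_iter {a : S} {j δ : ℕ} (h : ∀ i, j ≤ i → addPow i a = addPow (i + δ) a) :
    ∀ c i, j ≤ i → addPow i a = addPow (i + c * δ) a := by
  intro c
  induction c with
  | zero => intro i _; simp
  | succ c ih =>
    intro i hi
    have h1 := ih i hi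
    have h2 := h (i + c * δ) (le_trans hi (Nat.le_add_right _ _))
    rw [h1, h2]
    congr 1
    have : (c + 1) * δ = c * δ + δ := by ring
    omega

/-- injectivity of multiples from t = id and non-idempotency -/
lemma t_inj {a : S} (ht : ∀ x y : S, (∃ k, addPow k x = addPow k y) → x = y)
    (ha : a + a ≠ a) : ∀ j δ, 1 ≤ δ → addPow j a ≠ addPow (j + δ) a := by
  intro j δ hδ hEq
  have hall := per_all hEq
  have hiter := per_iter hall
  have hX : 1 ≤ δ * (j + 1) := Nat.one_le_iff_ne_zero.mpr
    (Nat.mul_ne_zero (by omega) (Nat.succ_ne_zero j))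
  have hXj : j + 1 ≤ δ * (j + 1) := Nat.le_mul_of_pos_left (j + 1) (by omega)
  set k' := δ * (j + 1) - 1 with hk'
  have h1 : j ≤ k' := by omega
  have h2 : addPow k' a = addPow (k' + (j + 1) * δ) a := hiter (j + 1) k' h1
  have h3 : k' + (j + 1) * δ = k' + k' + 1 := by
    have : (j + 1) * δ = δ * (j + 1) := mul_comm _ _
    omega
  have hwit : addPow k' a = addPow k' (a + a) := by
    rw [ap_distrib, ← ap_add]
    rw [h3] at h2
    exact h2
  exact ha (ht a (a + a) ⟨k', hwit⟩).symm

/-- if some fixed multiple is constant, then S is additively cancellative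
(or has a bi-absorbing element). -/
lemma constPow_canc
    (hS : ∀ r : S → S → Prop, IsCongruence r → (∀ a b, r a b ↔ a = b) ∨ (∀ a b, r a b))
    (hNB : ¬∃ w : S, BiAbsorbing w) (K : ℕ) (a₀ : S)
    (hfull : ∀ x y : S, addPow K x = addPow K y) :
    ∀ x y z : S, x + z = y + z → x = y := by
  set w := addPow K a₀ with hwdef
  have hcst : ∀ x : S, addPow K x = w := fun x => hfull x a₀
  have hmw : MulAbsorbing w := by
    intro c
    constructor
    · show c * w = w
      rw [hwdef, ap_mulL]; exact hcst _
    · show w * c = w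
      rw [hwdef, ap_mulR]; exact hcst _
  rcases hS _ (cong_modw hmw) with hid | hfl
  · intro x y z h
    have h2 : ∀ k, x + addPow k z = y + addPow k z := by
      intro k
      induction k with
      | zero => exact h
      | succ k ih =>
        calc x + addPow (k + 1) z = x + (addPow k z + z) := rfl
          _ = (x + addPow k z) + z := (add_assoc _ _ _).symm
          _ = (y + addPow k z) + z := by rw [ih]
          _ = y + addPow (k + 1) z := add_assoc _ _ _
    have h3 : x + w = y + w := by rw [← hcst z]; exact h2 K
    exact (hid x y).mp h3
  · exfalso
    apply hNB
    refine ⟨w, hmw, ?_⟩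
    intro x
    have hww : w + w = w := (ap_distrib K a₀ a₀).symm.trans (hcst _)
    rw [hfl x w]
    exact hww

/-- the main dichotomy for congruence-simple semirings without bi-absorbing element -/
lemma dich
    (hS : ∀ r : S → S → Prop, IsCongruence r → (∀ a b, r a b ↔ a = b) ∨ (∀ a b, r a b))
    (hNB : ¬∃ w : S, BiAbsorbing w) :
    (∀ a : S, a + a = a) ∨ ∀ a b c : S, a + c = b + c → a = b := by
  classical
  rcases hS _ cong_c with hc | hc
  · exact Or.inr (fun a b c h => (hc a b).mp ⟨c, h⟩)
  by_cases hidem : ∀ a : S, a + a = a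
  · exact Or.inl hidem
  push_neg at hidem
  obtain ⟨a, ha⟩ := hidem
  rcases hS _ cong_t with ht | ht
  · -- t = id
    rcases hS _ cong_q with hq | hq
    · -- q = id
      rcases hS _ cong_alpha with hα | hα
      · -- α = id : additively idempotent
        left
        intro x
        have hx : ∃ m n, leS x (addPow m (x + x)) ∧ leS (x + x) (addPow n x) :=
          ⟨0, 1, Or.inr ⟨x, rfl⟩, Or.inl rfl⟩
        exact ((hα _ _).mp hx).symm
      · -- α full : contradiction
        exfalso
        have tid : ∀ x y : S, (∃ k, addPow k x = addPow k y) → x = y :=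
          fun x y hxy => (ht x y).mp hxy
        have inj := t_inj tid ha
        obtain ⟨w, hw⟩ := hc a (a + a)
        have hkw : ∀ k, addPow k a + w = a + w := by
          intro k
          induction k with
          | zero => rfl
          | succ k ih =>
            calc addPow (k + 1) a + w = (addPow k a + a) + w := rfl
              _ = (addPow k a + w) + a := by
                  rw [add_assoc, add_comm a w, ← add_assoc]
              _ = (a + w) + a := by rw [ih]
              _ = (a + a) + w := by rw [add_assoc, add_comm w a, ← add_assoc]
              _ = a + w := hw.symm
        set u := a + w with hudef
        have hbu : ∀ b : S, leS b u := by
          intro b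
          obtain ⟨m, n, h1, _⟩ := hα b a
          exact leS_trans h1 (Or.inr ⟨w, hkw m⟩)
        have hu : ∀ s : S, u + s = u :=
          fun s => (hq (u + s) u).mp ⟨hbu (u + s), Or.inr ⟨s, rfl⟩⟩
        obtain ⟨m, n, h1, _⟩ := hα u a
        have hm : addPow m a = u := by
          rcases h1 with h | ⟨z, hz⟩
          · exact h.symm
          · exact hz.symm.trans (hu z)
        have hcontra : addPow (m + m + 1) a = addPow m a := by
          rw [ap_add, hm, hu u]
        exact inj m (m + 1) (by omega)
          (by rw [show m + (m + 1) = m + m + 1 from by omega]; exact hcontra.symm)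
    · -- q full : cancellative
      right
      have h1 := (hq (a + a) a).1
      rcases h1 with he | ⟨e, he⟩
      · exact absurd he ha
      set v := a + e with hvdef
      have hvv : v + v = v := by
        calc (a + e) + (a + e) = ((a + e) + a) + e := (add_assoc _ _ _).symm
          _ = (a + (e + a)) + e := by rw [add_assoc a e a]
          _ = (a + (a + e)) + e := by rw [add_comm e a]
          _ = ((a + a) + e) + e := by rw [← add_assoc]
          _ = a + e := by rw [he]
      have hneut : ∀ y : S, y + v = y := by
        intro y
        rcases (hq v y).1 with h | ⟨c, hc2⟩
        · rw [← h]; exact hvv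
        · rw [← hc2]
          calc (v + c) + v = v + (c + v) := add_assoc _ _ _
            _ = v + (v + c) := by rw [add_comm c v]
            _ = (v + v) + c := (add_assoc _ _ _).symm
            _ = v + c := by rw [hvv]
      have hinv : ∀ x : S, ∃ d, x + d = v := by
        intro x
        rcases (hq x v).1 with h | ⟨d, hd⟩
        · exact ⟨v, by rw [h]; exact hvv⟩
        · exact ⟨d, hd⟩
      intro x y z h
      obtain ⟨d, hd⟩ := hinv z
      have hxy : x + v = y + v := by
        rw [← hd, ← add_assoc, ← add_assoc, h]
      rw [hneut x, hneut y] at hxy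
      exact hxy
  · -- t full
    rcases hS _ (cong_pow 1) with hd | hd
    · -- doubling injective
      right
      obtain ⟨k, hk⟩ := ht a (a + a)
      have hk' : addPow k a = addPow (k + (k + 1)) a := by
        rw [ap_distrib] at hk
        rw [hk, ← ap_add]
        congr 1
      set K := k + 1 with hKdef
      have hper : ∀ i, k ≤ i → addPow i a = addPow (i + K) a := per_all hk'
      have hiter := per_iter hper
      have hKne : K ≠ 0 := by omega
      set e := K.factorization 2 with hedef
      set q := K / 2 ^ e with hqdef
      have hqpos : 0 < q := Nat.ordCompl_pos 2 hKne
      have hco : Nat.Coprime 2 q := Nat.coprime_ordCompl Nat.prime_two hKne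
      set s := Nat.totient q with hsdef
      have hspos : 0 < s := Nat.totient_pos.mpr hqpos
      have h2s : 1 ≤ 2 ^ s := Nat.one_le_two_pow
      have hmod : 2 ^ s ≡ 1 [MOD q] := Nat.ModEq.pow_totient hco
      have hqdvd : q ∣ 2 ^ s - 1 := (Nat.modEq_iff_dvd' h2s).mp hmod.symm
      have h2e : 2 ^ e ≤ K := Nat.ordProj_le 2 hKne
      have heK : e ≤ K := by
        have h1 : K < 2 ^ K := Nat.lt_two_pow_self
        exact le_of_lt ((Nat.pow_lt_pow_iff_right (by omega : 1 < 2)).mp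
          (lt_of_le_of_lt h2e h1))
      have hedvd : (2 : ℕ) ^ e ∣ 2 ^ K := pow_dvd_pow 2 heK
      have hKeq : 2 ^ e * q = K := Nat.ordProj_mul_ordCompl_eq_self K 2
      have hKdvd : K ∣ 2 ^ K * (2 ^ s - 1) := by
        have h6 : 2 ^ e * q ∣ 2 ^ K * (2 ^ s - 1) := mul_dvd_mul hedvd hqdvd
        rwa [hKeq] at h6
      obtain ⟨c, hcc⟩ := hKdvd
      have h2K : K ≤ 2 ^ K := le_of_lt (Nat.lt_two_pow_self (n := K))
      have hbig : addPow (2 ^ K - 1) a = addPow (2 ^ K - 1 + c * K) a :=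
        hiter c _ (by omega)
      have hidx : 2 ^ K - 1 + c * K = 2 ^ K * 2 ^ s - 1 := by
        have h1 : 2 ^ K * (2 ^ s - 1) + 2 ^ K = 2 ^ K * 2 ^ s := by
          have h2 : 2 ^ K * (2 ^ s - 1) + 2 ^ K * 1 = 2 ^ K * ((2 ^ s - 1) + 1) := by ring
          rw [mul_one] at h2
          rw [h2]
          congr 1
          omega
        have h3 : c * K = 2 ^ K * (2 ^ s - 1) := by rw [mul_comm]; exact hcc.symm
        have h4 : 1 ≤ 2 ^ K := Nat.one_le_two_pow
        omega
      rw [hidx] at hbig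
      -- cancellation of doublings
      have hcan : ∀ (j M M' : ℕ), 1 ≤ M → 1 ≤ M' →
          addPow (2 ^ j * M - 1) a = addPow (2 ^ j * M' - 1) a →
          addPow (M - 1) a = addPow (M' - 1) a := by
        intro j
        induction j with
        | zero => intro M M' _ _ hEq; simpa using hEq
        | succ j ih =>
          intro M M' hM hM' hEq
          apply ih M M' hM hM'
          have key : ∀ M0 : ℕ, 1 ≤ M0 →
              addPow 1 (addPow (2 ^ j * M0 - 1) a) = addPow (2 ^ (j + 1) * M0 - 1) a := by
            intro M0 hM0
            rw [ap_one, ← ap_add]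
            congr 1
            have hA : 2 ^ (j + 1) * M0 = 2 ^ j * M0 + 2 ^ j * M0 := by ring
            have hB : 1 ≤ 2 ^ j * M0 := Nat.one_le_iff_ne_zero.mpr
              (Nat.mul_ne_zero (by positivity) (by omega))
            omega
          apply (hd _ _).mp
          rw [key M hM, key M' hM']
          exact hEq
      have hfin : addPow 0 a = addPow (2 ^ s - 1) a := by
        have := hcan K 1 (2 ^ s) le_rfl h2s
          (by rw [mul_one]; exact hbig)
        simpa using this
      set m₁ := 2 ^ s - 1 with hm₁def
      have hm₁pos : 1 ≤ m₁ := by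
        have : 2 ≤ 2 ^ s := by
          calc 2 = 2 ^ 1 := rfl
            _ ≤ 2 ^ s := Nat.pow_le_pow_right (by omega) hspos
        omega
      have hQm₁ : ∀ j, addPow j a = addPow (j + m₁) a := by
        intro j
        cases j with
        | zero => simpa using hfin
        | succ j =>
          calc addPow (j + 1) a = addPow (0 + j + 1) a := by norm_num
            _ = addPow 0 a + addPow j a := ap_add 0 j a
            _ = addPow m₁ a + addPow j a := by rw [hfin]
            _ = addPow (m₁ + j + 1) a := (ap_add m₁ j a).symm
            _ = addPow (j + 1 + m₁) a := by congr 1; omega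
      have hexQ : ∃ δ, 1 ≤ δ ∧ ∀ j, addPow j a = addPow (j + δ) a := ⟨m₁, hm₁pos, hQm₁⟩
      have hspec := Nat.find_spec hexQ
      set m₀ := Nat.find hexQ with hm₀def
      obtain ⟨hm₀pos, hQm₀⟩ := hspec
      have hmin : ∀ δ, δ < m₀ → ¬(1 ≤ δ ∧ ∀ j, addPow j a = addPow (j + δ) a) :=
        fun δ hδ => Nat.find_min hexQ hδ
      have hm₀2 : 2 ≤ m₀ := by
        rcases Nat.lt_or_ge m₀ 2 with hlt | hge
        · exfalso
          have hm1 : m₀ = 1 := by omega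
          have := hQm₀ 0
          rw [hm1] at this
          exact ha ((this : a = a + a).symm)
        · exact hge
      have hiter₀ : ∀ c j, addPow j a = addPow (j + c * m₀) a := by
        intro c
        induction c with
        | zero => intro j; simp
        | succ c ih =>
          intro j
          rw [ih j, hQm₀ (j + c * m₀)]
          congr 1
          have : (c + 1) * m₀ = c * m₀ + m₀ := by ring
          omega
      have hdist : ∀ j δ, 1 ≤ δ → δ < m₀ → addPow j a ≠ addPow (j + δ) a := by
        intro j δ h1 h2 hEq
        apply hmin δ h2
        refine ⟨h1, ?_⟩
        have hge := per_all hEq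
        intro i
        have e1 : addPow i a = addPow (i + j * m₀) a := hiter₀ j i
        have e2 : addPow (i + j * m₀) a = addPow (i + j * m₀ + δ) a := by
          apply hge
          have : j ≤ j * m₀ := Nat.le_mul_of_pos_right j (by omega)
          omega
        have e3 : addPow (i + δ) a = addPow (i + δ + j * m₀) a := hiter₀ j (i + δ)
        rw [e1, e2, e3]
        congr 1
        omega
      set p := Nat.minFac m₀ with hpdef
      have hp : p.Prime := Nat.minFac_prime (by omega)
      have hpd : p ∣ m₀ := Nat.minFac_dvd m₀
      have hp2 : 2 ≤ p := hp.two_le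
      set z := m₀ / p with hzdef
      have hz : p * z = m₀ := Nat.mul_div_cancel' hpd
      have hzpos : 1 ≤ z := Nat.div_pos (Nat.minFac_le (by omega)) hp.pos
      have hzlt : z < m₀ := Nat.div_lt_self (by omega) hp.one_lt
      rcases hS _ (cong_pow (p - 1)) with hrp | hrp
      · exfalso
        have hXc : addPow (p - 1) (addPow (m₀ - 1) a) = addPow (m₀ - 1) a := by
          rw [ap_comp]
          have hidx2 : (p - 1 + 1) * (m₀ - 1 + 1) = p * m₀ := by
            congr 1 <;> omega
          rw [hidx2]
          have hit := hiter₀ (p - 1) (m₀ - 1)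
          have hsm : (p - 1 + 1) * m₀ = (p - 1) * m₀ + m₀ := by ring
          have hsm2 : p - 1 + 1 = p := by omega
          rw [hsm2] at hsm
          rw [show p * m₀ - 1 = (m₀ - 1) + (p - 1) * m₀ from by omega]
          exact hit.symm
        have hYc : addPow (p - 1) (addPow (z - 1) a) = addPow (m₀ - 1) a := by
          rw [ap_comp]
          have hidx3 : (p - 1 + 1) * (z - 1 + 1) = p * z := by
            congr 1 <;> omega
          rw [hidx3, hz]
        have heq := (hrp _ _).mp (hXc.trans hYc.symm)
        exact hdist (z - 1) (m₀ - z) (by omega) (by omega)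
          (by rw [show z - 1 + (m₀ - z) = m₀ - 1 from by omega]; exact heq.symm)
      · exact constPow_canc hS hNB (p - 1) a hrp
    · -- doubling constant
      exact Or.inr (constPow_canc hS hNB 1 a hd)

end PS

/-! matrix helpers -/

lemma Mat.ext' {n : ℕ} {S : Type} {A B : Mat n S}
    (h : ∀ i j, A.entry i j = B.entry i j) : A = B := by
  cases A; cases B
  simp only [Mat.mk.injEq]
  funext i j
  exact h i j

lemma finSum_rel {S : Type} [Add S] (r : S → S → Prop)
    (hadd : ∀ a b c d : S, r a b → r c d → r (a + c) (b + d)) :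
    ∀ {n : ℕ} (f g : Fin (n + 1) → S), (∀ k, r (f k) (g k)) → r (finSum f) (finSum g) := by
  intro n
  induction n with
  | zero => intro f g h; exact h 0
  | succ n ih =>
    intro f g h
    exact hadd _ _ _ _ (ih _ _ (fun k => h k.castSucc)) (h (Fin.last _))

lemma finSum_const {S : Type} [Add S] (w : S) (hww : w + w = w) :
    ∀ {n : ℕ}, finSum (fun _ : Fin (n + 1) => w) = w := by
  intro n
  induction n with
  | zero => rfl
  | succ n ih =>
    show finSum (fun _ : Fin (n + 1) => w) + w = w
    rw [ih, hww]

lemma finSum_last {S : Type} [Add S] (w : S) (habs : ∀ x : S, x + w = w)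
    {n : ℕ} (f : Fin (n + 1 + 1) → S) (hl : f (Fin.last (n + 1)) = w) : finSum f = w := by
  show finSum (fun i : Fin (n + 1) => f i.castSucc) + f (Fin.last (n + 1)) = w
  rw [hl]
  exact habs _

end Stmt8Aux

/-- if `M_n(S)` is congruence-simple for some `n ≥ 2` (`Mat (n+1)` has
size `n+2`), then `S` is congruence-simple, has no bi-absorbing element, `|S·S| ≥ 2`,
and `S` is additively idempotent or additively cancellative. -/
theorem stmt8 {S : Type} [PSemiring S] (n : ℕ)
    (h : CongSimple (Mat (n + 1) S)) :
    CongSimple S ∧ (¬∃ w : S, BiAbsorbing w) ∧ (∃ a b c d : S, a * b ≠ c * d) ∧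
      ((∀ a : S, a + a = a) ∨ ∀ a b c : S, a + c = b + c → a = b) := by
  classical
  open Stmt8Aux in
  have hex : ∃ s t : S, s ≠ t := by
    obtain ⟨⟨A, B, hAB⟩, -⟩ := h
    by_contra hcon
    push_neg at hcon
    exact hAB (Stmt8Aux.Mat.ext' fun i j => hcon _ _)
  obtain ⟨s, t, hst⟩ := hex
  have h10 : ((1 : Fin (n + 2)) : Fin (n + 2)) ≠ 0 := by
    intro hcon
    have := congrArg Fin.val hcon
    rw [Fin.val_one, Fin.val_zero] at this
    exact one_ne_zero this
  have hlast0 : (Fin.last (n + 1) : Fin (n + 2)) ≠ 0 := by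
    intro hcon
    have := congrArg Fin.val hcon
    rw [Fin.val_last, Fin.val_zero] at this
    exact (Nat.succ_ne_zero n) this
  -- Part 1 : S is congruence-simple
  have hCS : CongSimple S := by
    refine ⟨⟨s, t, hst⟩, ?_⟩
    intro r hr
    obtain ⟨hEq, hAdd, hMul⟩ := hr
    set R : Mat (n + 1) S → Mat (n + 1) S → Prop :=
      fun A B => ∀ i j, r (A.entry i j) (B.entry i j) with hRdef
    have hRc : IsCongruence R := by
      refine ⟨⟨fun A i j => hEq.refl _, fun hAB i j => hEq.symm (hAB i j),
        fun h1 h2 i j => hEq.trans (h1 i j) (h2 i j)⟩, ?_, ?_⟩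
      · intro A B C D h1 h2 i j
        exact hAdd _ _ _ _ (h1 i j) (h2 i j)
      · intro A B C D h1 h2 i j
        show r (finSum fun k => A.entry i k * C.entry k j)
          (finSum fun k => B.entry i k * D.entry k j)
        exact Stmt8Aux.finSum_rel r hAdd _ _ (fun k => hMul _ _ _ _ (h1 i k) (h2 k j))
    rcases h.2 R hRc with hid | hfl
    · left
      intro a b
      constructor
      · intro hab
        have heqc : Mat.const (n + 1) a = Mat.const (n + 1) b :=
          (hid _ _).mp (fun i j => hab)
        exact congrArg (fun M : Mat (n + 1) S => M.entry 0 0) heqc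
      · rintro rfl
        exact hEq.refl a
    · right
      intro a b
      exact hfl (Mat.const (n + 1) a) (Mat.const (n + 1) b) 0 0
  -- Part 2 : no bi-absorbing element
  have hNB : ¬∃ w : S, BiAbsorbing w := by
    rintro ⟨w, hmul, hadd⟩
    have hww : w + w = w := hadd w
    have hwl : ∀ x : S, w + x = w := fun x => (add_comm w x).trans (hadd x)
    set I : Mat (n + 1) S → Prop :=
      fun A => ∀ i j, (i ≠ 0 ∨ j ≠ 0) → A.entry i j = w with hIdef
    have hIaddR : ∀ {A C : Mat (n + 1) S}, I A → I (A + C) := by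
      intro A C hA i j hij
      show A.entry i j + C.entry i j = w
      rw [hA i j hij]
      exact hwl _
    have hIaddL : ∀ {A C : Mat (n + 1) S}, I A → I (C + A) := by
      intro A C hA i j hij
      show C.entry i j + A.entry i j = w
      rw [hA i j hij]
      exact hadd _
    have hImulR : ∀ {A : Mat (n + 1) S} (C : Mat (n + 1) S), I A → I (A * C) := by
      intro A C hA i j hij
      show finSum (fun k => A.entry i k * C.entry k j) = w
      by_cases hi : i = 0
      · subst hi
        apply Stmt8Aux.finSum_last w hadd
        rw [hA 0 (Fin.last _) (Or.inr hlast0)]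
        exact (hmul _).2
      · have hterm : ∀ k, A.entry i k * C.entry k j = w :=
          fun k => by rw [hA i k (Or.inl hi)]; exact (hmul _).2
        rw [show (fun k => A.entry i k * C.entry k j) = (fun _ => w) from funext hterm]
        exact Stmt8Aux.finSum_const w hww
    have hImulL : ∀ {A : Mat (n + 1) S} (C : Mat (n + 1) S), I A → I (C * A) := by
      intro A C hA i j hij
      show finSum (fun k => C.entry i k * A.entry k j) = w
      by_cases hj : j = 0
      · subst hj
        apply Stmt8Aux.finSum_last w hadd
        rw [hA (Fin.last _) 0 (Or.inl hlast0)]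
        exact (hmul _).1
      · have hterm : ∀ k, C.entry i k * A.entry k j = w :=
          fun k => by rw [hA k j (Or.inr hj)]; exact (hmul _).1
        rw [show (fun k => C.entry i k * A.entry k j) = (fun _ => w) from funext hterm]
        exact Stmt8Aux.finSum_const w hww
    set R : Mat (n + 1) S → Mat (n + 1) S → Prop :=
      fun A B => A = B ∨ (I A ∧ I B) with hRdef
    have hRc : IsCongruence R := by
      refine ⟨⟨fun A => Or.inl rfl, ?_, ?_⟩, ?_, ?_⟩
      · rintro A B (rfl | ⟨h1, h2⟩)
        · exact Or.inl rfl
        · exact Or.inr ⟨h2, h1⟩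
      · rintro A B C (rfl | ⟨h1, h2⟩) (rfl | ⟨h3, h4⟩)
        · exact Or.inl rfl
        · exact Or.inr ⟨h3, h4⟩
        · exact Or.inr ⟨h1, h2⟩
        · exact Or.inr ⟨h1, h4⟩
      · rintro A B C D (rfl | ⟨h1, h2⟩) (rfl | ⟨h3, h4⟩)
        · exact Or.inl rfl
        · exact Or.inr ⟨hIaddL h3, hIaddL h4⟩
        · exact Or.inr ⟨hIaddR h1, hIaddR h2⟩
        · exact Or.inr ⟨hIaddR h1, hIaddR h2⟩
      · rintro A B C D (rfl | ⟨h1, h2⟩) (rfl | ⟨h3, h4⟩)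
        · exact Or.inl rfl
        · exact Or.inr ⟨hImulL A h3, hImulL A h4⟩
        · exact Or.inr ⟨hImulR C h1, hImulR C h2⟩
        · exact Or.inr ⟨hImulR C h1, hImulR D h2⟩
    rcases h.2 R hRc with hid | hfl
    · set X : Mat (n + 1) S := ⟨fun i j => if i = 0 ∧ j = 0 then s else w⟩ with hXdef
      set Y : Mat (n + 1) S := ⟨fun i j => if i = 0 ∧ j = 0 then t else w⟩ with hYdef
      have hIX : I X := by
        intro i j hij
        show (if i = 0 ∧ j = 0 then s else w) = w
        rw [if_neg (by tauto)]
      have hIY : I Y := by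
        intro i j hij
        show (if i = 0 ∧ j = 0 then t else w) = w
        rw [if_neg (by tauto)]
      have hXY : X = Y := (hid X Y).mp (Or.inr ⟨hIX, hIY⟩)
      have hst' := congrArg (fun M : Mat (n + 1) S => M.entry 0 0) hXY
      simp only [hXdef, hYdef] at hst'
      simp at hst'
      exact hst hst'
    · have hxw : ∃ x : S, x ≠ w := by
        rcases eq_or_ne s w with heq | hsw
        · exact ⟨t, fun hcon => hst (heq.trans hcon.symm)⟩
        · exact ⟨s, hsw⟩
      obtain ⟨x, hxw⟩ := hxw
      rcases hfl (Mat.const (n + 1) x) (Mat.const (n + 1) w) with heq | ⟨hIA, -⟩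
      · exact hxw (congrArg (fun M : Mat (n + 1) S => M.entry 0 0) heq)
      · exact hxw (hIA 0 1 (Or.inr h10))
  -- Part 3 : |S·S| ≥ 2
  have hSS : ∃ a b c d : S, a * b ≠ c * d := by
    by_contra hcon
    push_neg at hcon
    set R : Mat (n + 1) S → Mat (n + 1) S → Prop :=
      fun A B => ∀ i j, (i ≠ 0 ∨ j ≠ 0) → A.entry i j = B.entry i j with hRdef
    have hmulEq : ∀ A B C D : Mat (n + 1) S, A * C = B * D := by
      intro A B C D
      apply Stmt8Aux.Mat.ext'
      intro i j
      show finSum (fun k => A.entry i k * C.entry k j)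
        = finSum (fun k => B.entry i k * D.entry k j)
      exact congrArg finSum (funext fun k => hcon _ _ _ _)
    have hRc : IsCongruence R := by
      refine ⟨⟨fun A i j _ => rfl, fun h1 i j hij => (h1 i j hij).symm,
        fun h1 h2 i j hij => (h1 i j hij).trans (h2 i j hij)⟩, ?_, ?_⟩
      · intro A B C D h1 h2 i j hij
        show A.entry i j + C.entry i j = B.entry i j + D.entry i j
        rw [h1 i j hij, h2 i j hij]
      · intro A B C D _ _
        rw [hmulEq A B C D]
        exact fun i j _ => rfl
    rcases h.2 R hRc with hid | hfl
    · set X : Mat (n + 1) S := ⟨fun i j => if i = 0 ∧ j = 0 then s else t⟩ with hXdef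
      have hXY : X = Mat.const (n + 1) t := by
        apply (hid X (Mat.const (n + 1) t)).mp
        intro i j hij
        show (if i = 0 ∧ j = 0 then s else t) = t
        rw [if_neg (by tauto)]
      have hst' := congrArg (fun M : Mat (n + 1) S => M.entry 0 0) hXY
      simp only [hXdef] at hst'
      simp at hst'
      exact hst hst'
    · exact hst (hfl (Mat.const (n + 1) s) (Mat.const (n + 1) t) 0 1 (Or.inr h10))
  exact ⟨hCS, hNB, hSS, Stmt8Aux.dich hCS.2 hNB⟩
end

section
/- Let S be a semiring with a multiplicatively absorbing element such that S is congruence-simple, S contains no bi-absorbing element, and |S·S| ≥ 2. Then S has a zero element (i.e., the multiplicatively absorbing element is additively neutral). -/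
/-- a multiplicatively absorbing element of a congruence-simple
semiring without bi-absorbing element and with `|S·S| ≥ 2` is a zero. -/
theorem stmt9 {S : Type} [PSemiring S] (w : S) (hw : MulAbsorbing w)
    (h1 : CongSimple S) (h2 : ¬∃ o : S, BiAbsorbing o)
    (h3 : ∃ a b c d : S, a * b ≠ c * d) :
    IsZero w := by
  -- First, w + w = w, since w = w * (w + w) = w*w + w*w = w + w.
  have hww : w + w = w := by
    have hd : w * (w + w) = w * w + w * w := PSemiring.left_distrib w w w
    rw [(hw (w + w)).2, (hw w).1] at hd
    exact hd.symm
  -- The congruence r a b := a + w = b + w.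
  set r : S → S → Prop := fun a b => a + w = b + w with hrdef
  have hcong : IsCongruence r := by
    refine ⟨⟨fun a => rfl, fun h => h.symm, fun h h' => h.trans h'⟩, ?_, ?_⟩
    · intro a b c d hab hcd
      show (a + c) + w = (b + d) + w
      have key : ∀ x y : S, (x + y) + w = (x + w) + (y + w) := by
        intro x y
        calc (x + y) + w = (x + y) + (w + w) := by rw [hww]
          _ = (x + w) + (y + w) := by
              rw [add_assoc, add_assoc, add_left_comm y w w]
      rw [key a c, key b d, hab, hcd]
    · intro a b c d hab hcd
      show a * c + w = b * d + w
      have key : ∀ x y : S, (x + w) * (y + w) = x * y + w := by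
        intro x y
        calc (x + w) * (y + w) = x * (y + w) + w * (y + w) :=
              PSemiring.right_distrib x w (y + w)
          _ = (x * y + x * w) + w * (y + w) := by
              rw [PSemiring.left_distrib x y w]
          _ = (x * y + w) + w := by rw [(hw x).1, (hw (y + w)).2]
          _ = x * y + (w + w) := add_assoc _ _ _
          _ = x * y + w := by rw [hww]
      calc a * c + w = (a + w) * (c + w) := (key a c).symm
        _ = (b + w) * (d + w) := by rw [hab, hcd]
        _ = b * d + w := key b d
  rcases h1.2 r hcong with hid | hfull
  · -- identity case: a + w = a for all a, since r a (a + w) always holds.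
    refine ⟨hw, fun a => ?_⟩
    have : r a (a + w) := by
      show a + w = (a + w) + w
      rw [add_assoc, hww]
    exact ((hid a (a + w)).mp this).symm
  · -- full case: a + w = w for all a, so w is bi-absorbing: contradiction.
    exfalso
    apply h2
    refine ⟨w, hw, fun a => ?_⟩
    have : a + w = w + w := hfull a w
    rw [hww] at this
    exact this
end

section
/- Let S be a semiring, n ≥ 1, and I a bi-ideal of M_n(S). Then there exists a ∈ S such that the constant matrix ā (all entries equal to a) lies in I. Moreover, if a ∈ S satisfies ā ∈ I and a + S = S, then I = M_n(S). -/
/-- every bi-ideal of `M_n(S)` contains some constant matrix `ā`;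
if moreover `a + S = S`, then `I = M_n(S)`. -/
theorem stmt12 {S : Type} [PSemiring S] (n : ℕ) (I : Set (Mat n S))
    (hI : IsBiIdeal I) :
    (∃ a : S, Mat.const n a ∈ I) ∧
    (∀ a : S, Mat.const n a ∈ I → (∀ b : S, ∃ s : S, a + s = b) → I = Set.univ) := by
  obtain ⟨⟨A, hA⟩, hcl⟩ := hI
  constructor
  · set c := A.entry 0 0 with hc
    set C : Mat n S := Mat.const n c with hC
    have h1 : C * A ∈ I := (hcl A hA C).2.2
    have h2 : (C * A) * C ∈ I := (hcl _ h1 C).2.1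
    refine ⟨finSum (fun k => finSum (fun l => c * A.entry l k) * c), ?_⟩
    have : Mat.const n (finSum (fun k => finSum (fun l => c * A.entry l k) * c))
        = (C * A) * C := rfl
    rw [this]; exact h2
  · intro a ha h
    apply Set.eq_univ_iff_forall.mpr
    intro B
    set M : Mat n S := ⟨fun i j => Classical.choose (h (B.entry i j))⟩ with hM
    have hmem : Mat.const n a + M ∈ I := (hcl _ ha M).1
    have heq : Mat.const n a + M = B := by
      obtain ⟨f⟩ := B
      show (⟨fun i j => a + Classical.choose (h (f i j))⟩ : Mat n S) = ⟨f⟩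
      congr 1
      funext i j
      exact Classical.choose_spec (h (f i j))
    rwa [heq] at hmem
end

section
/- Let S be an additively archimedean semiring that is additively uniquely m-divisible for some m ≥ 2. Then for all a, b ∈ S there exists c ∈ S with c ≤_S a and c ≤_S b. -/
section AuxLemmas
variable {S : Type} [AddCommSemigroup S] [Mul S]

lemma addPow_succ' (k : ℕ) (b : S) : addPow (k + 1) b = b + addPow k b := by
  induction k with
  | zero => show b + b = b + b; rfl
  | succ k ih =>
    show addPow (k + 1) b + b = b + (addPow k b + b)
    rw [ih, add_assoc]

lemma addPow_split (p t : ℕ) (b : S) :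
    addPow (p + t + 1) b = addPow p b + addPow t b := by
  induction t with
  | zero => rfl
  | succ t ih =>
    show addPow (p + t + 1) b + b = addPow p b + (addPow t b + b)
    rw [ih, add_assoc]

lemma addPow_add (k : ℕ) (x y : S) : addPow k (x + y) = addPow k x + addPow k y := by
  induction k with
  | zero => rfl
  | succ k ih =>
    show addPow k (x + y) + (x + y) = (addPow k x + x) + (addPow k y + y)
    rw [ih, add_add_add_comm]

lemma leS_trans {a b c : S} (h1 : leS a b) (h2 : leS b c) : leS a c := by
  rcases h1 with rfl | ⟨x, hx⟩
  · exact h2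
  rcases h2 with rfl | ⟨y, hy⟩
  · exact Or.inr ⟨x, hx⟩
  · exact Or.inr ⟨x + y, by rw [← add_assoc, hx, hy]⟩

lemma addPow_mono {p q : ℕ} (h : p ≤ q) (b : S) : leS (addPow p b) (addPow q b) := by
  rcases Nat.eq_or_lt_of_le h with rfl | hlt
  · exact Or.inl rfl
  · obtain ⟨t, rfl⟩ : ∃ t, q = p + t + 1 := ⟨q - p - 1, by omega⟩
    exact Or.inr ⟨addPow t b, (addPow_split p t b).symm⟩

lemma addPow_addPow (p q : ℕ) (b : S) :
    addPow p (addPow q b) = addPow (p * q + p + q) b := by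
  induction p with
  | zero => simp [addPow]
  | succ p ih =>
    show addPow p (addPow q b) + addPow q b = _
    rw [ih, ← addPow_split]
    congr 1
    ring

end AuxLemmas

/-- an additively archimedean, additively uniquely `m`-divisible
(`m ≥ 2`, here `m = m₀ + 2` via `addPow (m₀+1) b = (m₀+2)·b`) semiring has a
downwards directed `≤_S`. -/
theorem stmt17 {S : Type} [PSemiring S]
    (harch : ∀ a b : S, ∃ m : ℕ, leS a (addPow m b))
    (m : ℕ) (hdiv : ∀ a : S, ∃! b : S, a = addPow (m + 1) b) :
    ∀ a b : S, ∃ c : S, leS c a ∧ leS c b := by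
  have cancel : ∀ x y : S, leS (addPow (m + 1) x) (addPow (m + 1) y) → leS x y := by
    intro x y h
    rcases h with h | ⟨c, hc⟩
    · exact Or.inl ((hdiv (addPow (m + 1) y)).unique h.symm rfl)
    · obtain ⟨c', hc', -⟩ := hdiv c
      have : addPow (m + 1) y = addPow (m + 1) (x + c') := by
        rw [addPow_add, ← hc', hc]
      exact Or.inr ⟨c', (hdiv (addPow (m + 1) y)).unique this rfl⟩
  have key : ∀ k, ∀ a b : S, leS a (addPow k b) → ∃ c : S, leS c a ∧ leS c b := by
    intro k
    induction k using Nat.strong_induction_on with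
    | _ k ih =>
      intro a b hab
      rcases Nat.eq_zero_or_pos k with rfl | hk
      · exact ⟨a, Or.inl rfl, hab⟩
      · obtain ⟨a', ha', -⟩ := hdiv a
        set q := k / (m + 2) with hq
        have hqk : q < k := Nat.div_lt_self hk (by omega)
        have h1 := Nat.div_add_mod k (m + 2)
        rw [← hq] at h1
        have h2 := Nat.mod_lt k (show 0 < m + 2 by omega)
        have hmul : (m + 1) * q + q = (m + 2) * q := by ring
        have hle : k ≤ (m + 1) * q + (m + 1) + q := by omega
        have step1 : leS (addPow (m + 1) a') (addPow k b) := ha' ▸ hab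
        have step3 : leS (addPow (m + 1) a') (addPow (m + 1) (addPow q b)) := by
          rw [addPow_addPow]
          exact leS_trans step1 (addPow_mono hle b)
        have step4 : leS a' (addPow q b) := cancel _ _ step3
        obtain ⟨c, hca', hcb⟩ := ih q hqk a' b step4
        have ha'a : leS a' a := Or.inr ⟨addPow m a', by rw [← addPow_succ', ← ha']⟩
        exact ⟨c, leS_trans hca' ha'a, hcb⟩
  intro a b
  obtain ⟨k, hk⟩ := harch a b
  exact key k a b hk
end

section
/- A semiring S is additively archimedean if and only if the matrix semiring M_n(S) is additively archimedean, for any n ≥ 1. -/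
lemma mat_ext {n : ℕ} {S : Type} {A B : Mat n S}
    (h : ∀ i j, A.entry i j = B.entry i j) : A = B := by
  cases A; cases B
  simp only [Mat.mk.injEq]
  funext i j
  exact h i j

lemma add_entry {n : ℕ} {S : Type} [Add S] (A B : Mat n S) (i j : Fin (n+1)) :
    (A + B).entry i j = A.entry i j + B.entry i j := rfl

lemma addPow_entry {n : ℕ} {S : Type} [Add S] (m : ℕ) (B : Mat n S) (i j : Fin (n+1)) :
    (addPow m B).entry i j = addPow m (B.entry i j) := by
  induction m with
  | zero => rfl
  | succ m ih => show (addPow m B + B).entry i j = _; rw [add_entry, ih]; rfl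

lemma leS_succ {T : Type} [AddCommSemigroup T] {a b : T} {m : ℕ}
    (h : leS a (addPow m b)) : leS a (addPow (m+1) b) := by
  rcases h with h | ⟨c, h⟩
  · exact Or.inr ⟨b, by rw [h]; rfl⟩
  · exact Or.inr ⟨c + b, by show a + (c + b) = addPow m b + b; rw [← add_assoc, h]⟩

lemma leS_mono {T : Type} [AddCommSemigroup T] {a b : T} {m m' : ℕ} (hm : m ≤ m')
    (h : leS a (addPow m b)) : leS a (addPow m' b) := by
  induction m' with
  | zero => exact (Nat.le_zero.mp hm) ▸ h
  | succ k ih =>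
    rcases Nat.lt_or_ge m (k+1) with h1 | h1
    · exact leS_succ (ih (Nat.lt_succ_iff.mp h1))
    · exact (Nat.le_antisymm hm h1) ▸ h

lemma leS_exists {T : Type} [AddCommSemigroup T] {a b : T} {m : ℕ}
    (h : leS a (addPow m b)) : ∃ c, a + c = addPow (m+1) b := by
  rcases h with h | ⟨c, h⟩
  · exact ⟨b, by rw [h]; rfl⟩
  · exact ⟨c + b, by show a + (c + b) = addPow m b + b; rw [← add_assoc, h]⟩
/-- `S` is additively archimedean iff `M_n(S)` is
(`Mat n S` has size `n+1`, covering all `n ≥ 1`). -/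
theorem stmt18 {S : Type} [PSemiring S] (n : ℕ) :
    (∀ a b : S, ∃ m : ℕ, leS a (addPow m b)) ↔
      (∀ A B : Mat n S, ∃ m : ℕ, leS A (addPow m B)) := by
  constructor
  · intro h A B
    -- choose m for each entry
    choose f hf using fun i j => h (A.entry i j) (B.entry i j)
    set M := Finset.univ.sup (fun p : Fin (n+1) × Fin (n+1) => f p.1 p.2) with hM
    have hle : ∀ i j, leS (A.entry i j) (addPow M (B.entry i j)) := fun i j =>
      leS_mono (Finset.le_sup (f := fun p : Fin (n+1) × Fin (n+1) => f p.1 p.2)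
        (Finset.mem_univ (i, j))) (hf i j)
    choose g hg using fun i j => leS_exists (hle i j)
    refine ⟨M + 1, Or.inr ⟨⟨g⟩, mat_ext fun i j => ?_⟩⟩
    rw [add_entry, addPow_entry]
    exact hg i j
  · intro h a b
    obtain ⟨m, hm⟩ := h (Mat.const n a) (Mat.const n b)
    rcases hm with hm | ⟨C, hC⟩
    · refine ⟨m, Or.inl ?_⟩
      have := congrArg (fun A => A.entry 0 0) hm
      simpa [Mat.const, addPow_entry] using this
    · refine ⟨m, Or.inr ⟨C.entry 0 0, ?_⟩⟩
      have := congrArg (fun A => A.entry 0 0) hC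
      simpa [Mat.const, addPow_entry, add_entry] using this
end
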